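/- Let C be a balanced dagger category (every bimorphism is an isomorphism) that admits polar decomposition, and let D : J ⥤ C be a diagram with a limit cone (L, (l_A)) such that l_A† ∘ l_A commutes with l_B† ∘ l_B for all A, B in some weakly initial class Ω of objects of J. Then there exists a diagram E : J ⥤ C naturally isomorphic to D such that (E, Ω) has a dagger limit. -/

import Mathlib

open CategoryTheory

universe v u v₁ u₁ v₂ u₂

class DaggerCategory (C : Type u) [Category.{v} C] where
  dag : ∀ {A B : C}, (A ⟶ B) → (B ⟶ A)
  dag_id : ∀ (A : C), dag (𝟙 A) = 𝟙 A
  dag_comp : ∀ {A B X : C} (f : A ⟶ B) (g : B ⟶ X), dag (f ≫ g) = dag g ≫ dag f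
  dag_dag : ∀ {A B : C} (f : A ⟶ B), dag (dag f) = f

postfix:max "†" => DaggerCategory.dag

section Defs

variable {C : Type u} [Category.{v} C] [DaggerCategory C]

/-- A morphism `f` is a partial isometry if `f ∘ f† ∘ f = f`. -/
def IsPartialIsometry {A B : C} (f : A ⟶ B) : Prop :=
  f ≫ f† ≫ f = f

/-- A morphism `f : A ⟶ B` is unitary if `f† ∘ f = 𝟙 A` and `f ∘ f† = 𝟙 B`. -/
def IsUnitary {A B : C} (f : A ⟶ B) : Prop :=
  f ≫ f† = 𝟙 A ∧ f† ≫ f = 𝟙 B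

/-- A morphism `f` is dagger monic (an isometry) if `f† ∘ f = 𝟙`. -/
def DaggerMonic {A B : C} (f : A ⟶ B) : Prop :=
  f ≫ f† = 𝟙 A

/-- `(L, l)` is a limit cone over the diagram `D`. -/
def IsLimitCone {J : Type u₁} [Category.{v₁} J] (D : J ⥤ C) (L : C)
    (l : ∀ j : J, L ⟶ D.obj j) : Prop :=
  (∀ {j j' : J} (f : j ⟶ j'), l j ≫ D.map f = l j') ∧
  (∀ (M : C) (m : ∀ j : J, M ⟶ D.obj j),
    (∀ {j j' : J} (f : j ⟶ j'), m j ≫ D.map f = m j') →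
    ∃! g : M ⟶ L, ∀ j : J, g ≫ l j = m j)

/-- A class of objects `Ω` is weakly initial when every object admits a morphism
from some member of `Ω`. -/
def WeaklyInitial {J : Type u₁} [Category.{v₁} J] (Ω : Set J) : Prop :=
  ∀ B : J, ∃ A ∈ Ω, Nonempty (A ⟶ B)

/-- `(L, l)` is a dagger limit of `(D, Ω)`: a limit cone whose legs at `Ω` are
partial isometries with pairwise commuting induced projections. -/
def IsDaggerLimit {J : Type u₁} [Category.{v₁} J] (D : J ⥤ C) (Ω : Set J) (L : C)
    (l : ∀ j : J, L ⟶ D.obj j) : Prop :=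
  IsLimitCone D L l ∧
  (∀ j ∈ Ω, IsPartialIsometry (l j)) ∧
  (∀ j ∈ Ω, ∀ j' ∈ Ω,
    (l j ≫ (l j)†) ≫ (l j' ≫ (l j')†) = (l j' ≫ (l j')†) ≫ (l j ≫ (l j)†))

end Defs

/-- `C` admits polar decomposition: every morphism `f : A ⟶ B` factors as
`f = p ∘ i = j ∘ p` where `p` is a partial isometry and `i`, `j` are self-adjoint
bimorphisms. -/
def AdmitsPolarDecomposition (C : Type u) [Category.{v} C] [DaggerCategory C] : Prop :=
  ∀ {A B : C} (f : A ⟶ B), ∃ (p : A ⟶ B) (i : A ⟶ A) (j : B ⟶ B),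
    IsPartialIsometry p ∧ i† = i ∧ j† = j ∧
    Mono i ∧ Epi i ∧ Mono j ∧ Epi j ∧
    f = i ≫ p ∧ f = p ≫ j


section Aux

open DaggerCategory

variable {C : Type u} [Category.{v} C] [DaggerCategory C]

lemma proj_sa {A B : C} (f : A ⟶ B) : (f ≫ f†)† = f ≫ f† := by
  rw [dag_comp, dag_dag]

lemma proj_idem {A B : C} {f : A ⟶ B} (h : IsPartialIsometry f) :
    (f ≫ f†) ≫ (f ≫ f†) = f ≫ f† := by
  calc (f ≫ f†) ≫ (f ≫ f†) = (f ≫ f† ≫ f) ≫ f† := by simp only [Category.assoc]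
    _ = f ≫ f† := by rw [h]

lemma T_eq {A B : C} {f p : A ⟶ B} {i : A ⟶ A} {j : B ⟶ B}
    (h1 : f = i ≫ p) (h2 : f = p ≫ j) (hi : i† = i) (hj : j† = j) :
    f ≫ f† = (i ≫ i) ≫ (p ≫ p†) := by
  have hpd : p† ≫ i = j ≫ p† := by
    have h := congrArg (fun x => x†) (h1.symm.trans h2)
    simp only [dag_comp, hi, hj] at h
    exact h
  calc f ≫ f† = i ≫ (p ≫ (p† ≫ i)) := by
        rw [h1, dag_comp, hi]; simp only [Category.assoc]
    _ = i ≫ (p ≫ (j ≫ p†)) := by rw [hpd]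
    _ = i ≫ ((p ≫ j) ≫ p†) := by rw [Category.assoc]
    _ = i ≫ ((i ≫ p) ≫ p†) := by rw [← h2, h1]
    _ = (i ≫ i) ≫ (p ≫ p†) := by simp only [Category.assoc]

lemma proj_comm {L : C} {P Q S T u v : L ⟶ L}
    (hP : P† = P) (hQ : Q† = Q) (hPP : P ≫ P = P) (hQQ : Q ≫ Q = Q)
    (hS : S† = S) (hu : Epi u) (hv : Epi v)
    (hT : T = u ≫ P) (hSv : S = v ≫ Q)
    (hTS : T ≫ S = S ≫ T) :
    P ≫ Q = Q ≫ P := by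
  haveI := hu; haveI := hv
  have hT' : T ≫ P = T := by rw [hT, Category.assoc, hPP]
  have e1 : u ≫ P ≫ S ≫ P = u ≫ P ≫ S := by
    calc u ≫ P ≫ S ≫ P = (T ≫ S) ≫ P := by rw [hT]; simp only [Category.assoc]
      _ = S ≫ (T ≫ P) := by rw [hTS, Category.assoc]
      _ = S ≫ T := by rw [hT']
      _ = T ≫ S := hTS.symm
      _ = u ≫ P ≫ S := by rw [hT, Category.assoc]
  have a : P ≫ S ≫ P = P ≫ S := (cancel_epi u).1 e1
  have adag : P ≫ S ≫ P = S ≫ P := by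
    have h := congrArg (fun x => x†) a
    simp only [dag_comp, hP, hS] at h
    simpa only [Category.assoc] using h
  have c : P ≫ S = S ≫ P := a.symm.trans adag
  have e2 : v ≫ Q ≫ P ≫ Q = v ≫ Q ≫ P := by
    have hSQ : S ≫ Q = S := by rw [hSv, Category.assoc, hQQ]
    calc v ≫ Q ≫ P ≫ Q = (S ≫ P) ≫ Q := by rw [hSv]; simp only [Category.assoc]
      _ = (P ≫ S) ≫ Q := by rw [c]
      _ = P ≫ (S ≫ Q) := by rw [Category.assoc]
      _ = P ≫ S := by rw [hSQ]
      _ = S ≫ P := c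
      _ = v ≫ Q ≫ P := by rw [hSv, Category.assoc]
  have b : Q ≫ P ≫ Q = Q ≫ P := (cancel_epi v).1 e2
  have bdag : Q ≫ P ≫ Q = P ≫ Q := by
    have h := congrArg (fun x => x†) b
    simp only [dag_comp, hP, hQ] at h
    simpa only [Category.assoc] using h
  exact bdag.symm.trans b

/-- Twist a diagram by a family of automorphisms of its objects. -/
@[reducible]
def twistFunctor {J : Type u₁} [Category.{v₁} J] (D : J ⥤ C)
    (e : ∀ a : J, D.obj a ≅ D.obj a) : J ⥤ C where
  obj := D.obj
  map {a b} f := (e a).hom ≫ D.map f ≫ (e b).inv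
  map_id a := by simp
  map_comp f g := by simp

/-- The twisted diagram is naturally isomorphic to the original one. -/
def twistIso {J : Type u₁} [Category.{v₁} J] (D : J ⥤ C)
    (e : ∀ a : J, D.obj a ≅ D.obj a) : D ≅ twistFunctor D e :=
  NatIso.ofComponents (fun a => (e a).symm)
    (by intro X Y f; simp [twistFunctor])

end Aux

/-- Let `C` be a balanced dagger category admitting polar decomposition and
`D : J ⥤ C` a diagram with a limit cone `(L, l)` such that `l_A† ∘ l_A` commutes with
`l_B† ∘ l_B` for all `A, B` in some weakly initial class `Ω`. Then there is a diagram `E`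
naturally isomorphic to `D` such that `(E, Ω)` has a dagger limit. -/
theorem daggerLimit_of_polar_balanced {C : Type u} [Category.{v} C] [DaggerCategory C]
    [Balanced C] (hpolar : AdmitsPolarDecomposition C)
    {J : Type u₁} [Category.{v₁} J] (Ω : Set J) (hΩ : WeaklyInitial Ω) (D : J ⥤ C)
    {L : C} (l : ∀ j : J, L ⟶ D.obj j) (hL : IsLimitCone D L l)
    (hcomm : ∀ j ∈ Ω, ∀ j' ∈ Ω,
      (l j ≫ (l j)†) ≫ (l j' ≫ (l j')†) = (l j' ≫ (l j')†) ≫ (l j ≫ (l j)†)) :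
    ∃ E : J ⥤ C, Nonempty (D ≅ E) ∧
      ∃ (L' : C) (l' : ∀ j : J, L' ⟶ E.obj j), IsDaggerLimit E Ω L' l' := by
  classical
  obtain ⟨hcone, huniv⟩ := hL
  choose p i jj hp hi hj hmi hei hmj hej h1 h2 using fun a : J => hpolar (l a)
  have isoJ : ∀ a, IsIso (jj a) := fun a => by
    haveI := hmj a; haveI := hej a; exact isIso_of_mono_of_epi _
  let e : ∀ a : J, D.obj a ≅ D.obj a := fun a => @asIso _ _ _ _ (jj a) (isoJ a)
  have ehom : ∀ a, (e a).hom = jj a := fun a => rfl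
  have hl' : ∀ a, l a ≫ (e a).inv = p a := by
    intro a
    rw [h2 a, Category.assoc, ← ehom a, Iso.hom_inv_id, Category.comp_id]
  refine ⟨twistFunctor D e, ⟨twistIso D e⟩, L, fun a => l a ≫ (e a).inv,
    ⟨⟨?_, ?_⟩, ?_, ?_⟩⟩
  · intro a b f
    show (l a ≫ (e a).inv) ≫ (e a).hom ≫ D.map f ≫ (e b).inv = l b ≫ (e b).inv
    rw [← hcone f]
    simp only [Category.assoc, Iso.inv_hom_id_assoc]
  · intro M m hm
    have hm' : ∀ {a b : J} (f : a ⟶ b),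
        (m a ≫ (e a).hom) ≫ D.map f = m b ≫ (e b).hom := by
      intro a b f
      have h : m a ≫ (e a).hom ≫ D.map f ≫ (e b).inv = m b := hm f
      calc (m a ≫ (e a).hom) ≫ D.map f
          = (m a ≫ (e a).hom ≫ D.map f ≫ (e b).inv) ≫ (e b).hom := by
            simp only [Category.assoc, Iso.inv_hom_id, Category.comp_id]
        _ = m b ≫ (e b).hom := by rw [h]
    obtain ⟨g, hg, hgu⟩ := huniv M (fun a => m a ≫ (e a).hom) hm'
    refine ⟨g, fun a => ?_, fun g' hg' => hgu g' fun a => ?_⟩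
    · rw [← Category.assoc, hg a, Category.assoc, Iso.hom_inv_id, Category.comp_id]
    · have h := hg' a
      calc g' ≫ l a = (g' ≫ l a ≫ (e a).inv) ≫ (e a).hom := by
            simp only [Category.assoc, Iso.inv_hom_id, Category.comp_id]
        _ = m a ≫ (e a).hom := by rw [h]
  · intro a _
    show IsPartialIsometry (l a ≫ (e a).inv)
    rw [hl' a]
    exact hp a
  · intro a ha b hb
    show ((l a ≫ (e a).inv) ≫ ((l a ≫ (e a).inv))†) ≫
          ((l b ≫ (e b).inv) ≫ ((l b ≫ (e b).inv))†) =
        ((l b ≫ (e b).inv) ≫ ((l b ≫ (e b).inv))†) ≫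
          ((l a ≫ (e a).inv) ≫ ((l a ≫ (e a).inv))†)
    rw [hl' a, hl' b]
    have hu : Epi (i a ≫ i a) := by haveI := hei a; exact epi_comp _ _
    have hv : Epi (i b ≫ i b) := by haveI := hei b; exact epi_comp _ _
    exact proj_comm (proj_sa (p a)) (proj_sa (p b)) (proj_idem (hp a)) (proj_idem (hp b))
      (proj_sa (l b)) hu hv
      (T_eq (h1 a) (h2 a) (hi a) (hj a)) (T_eq (h1 b) (h2 b) (hi b) (hj b))
      (hcomm a ha b hb)
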